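/- Let c > 0 and V ∈ ℝ with |V| < c, and set γ_V = (1 − V²/c²)^(−1/2). Define T_V : ℝ³ → ℝ³ by T_V(u) = (γ_V(u₁ − (V/c)√(1 + ‖u‖²)), u₂, u₃). Let f : ℝ³ → ℝ be differentiable and set g = f ∘ T_{−V} (so that g(T_V(u)) = f(u) for all u). Then for every u ∈ ℝ³, writing u' = T_V(u): ∂₁g(u') = √((1 + ‖u‖²)/(1 + ‖u'‖²)) · ∂₁f(u), and for i = 2, 3: ∂ᵢg(u') = (V/c) γ_V (u'ᵢ/√(1 + ‖u'‖²)) · ∂₁f(u) + ∂ᵢf(u). -/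

import Mathlib

/-- The action `T_V` of a Lorentz boost with speed `V` along the first coordinate axis on
the reduced velocity: `T_V(u) = (γ_V(u₁ − (V/c)√(1 + ‖u‖²)), u₂, u₃)`,
with `γ_V = (1 − V²/c²)^(−1/2)`. -/
noncomputable def velBoost (c V : ℝ) (u : EuclideanSpace ℝ (Fin 3)) :
    EuclideanSpace ℝ (Fin 3) :=
  (WithLp.equiv 2 (Fin 3 → ℝ)).symm
    ![(1 / Real.sqrt (1 - V ^ 2 / c ^ 2)) * (u 0 - (V / c) * Real.sqrt (1 + ‖u‖ ^ 2)),
      u 1, u 2]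

open Real

lemma vb_apply0 (c V : ℝ) (u : EuclideanSpace ℝ (Fin 3)) :
    velBoost c V u 0 = (1 / Real.sqrt (1 - V ^ 2 / c ^ 2)) * (u 0 - (V / c) * Real.sqrt (1 + ‖u‖ ^ 2)) := by
  simp [velBoost]

lemma vb_apply1 (c V : ℝ) (u : EuclideanSpace ℝ (Fin 3)) : velBoost c V u 1 = u 1 := by
  simp [velBoost]

lemma vb_apply2 (c V : ℝ) (u : EuclideanSpace ℝ (Fin 3)) : velBoost c V u 2 = u 2 := by
  simp [velBoost]

lemma norm_sq3 (u : EuclideanSpace ℝ (Fin 3)) : ‖u‖^2 = u 0^2 + u 1^2 + u 2^2 := by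
  rw [EuclideanSpace.norm_eq, Real.sq_sqrt (by positivity)]
  simp [Fin.sum_univ_three, sq_abs]

lemma d_pos {c V : ℝ} (hc : 0 < c) (hV : |V| < c) : 0 < 1 - V^2/c^2 := by
  have h1 : V^2 < c^2 := by
    have := sq_abs V
    nlinarith [abs_nonneg V]
  rw [sub_pos, div_lt_one (by positivity)]; exact h1

lemma gam_sq {c V : ℝ} (hc : 0 < c) (hV : |V| < c) :
    (1 / Real.sqrt (1 - V^2/c^2))^2 * (1 - V^2/c^2) = 1 := by
  have hd := d_pos hc hV
  rw [one_div, inv_pow, Real.sq_sqrt hd.le, inv_mul_cancel₀ hd.ne']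

lemma s_pos (u : EuclideanSpace ℝ (Fin 3)) : 0 < Real.sqrt (1 + ‖u‖^2) :=
  Real.sqrt_pos.2 (by positivity)

lemma s_sq (u : EuclideanSpace ℝ (Fin 3)) : (Real.sqrt (1 + ‖u‖^2))^2 = 1 + ‖u‖^2 :=
  Real.sq_sqrt (by positivity)

/-- `s - (V/c) u₀ > 0`. -/
lemma s_sub_pos {c V : ℝ} (hc : 0 < c) (hV : |V| < c) (u : EuclideanSpace ℝ (Fin 3)) :
    0 < Real.sqrt (1 + ‖u‖^2) - (V/c) * u 0 := by
  set s := Real.sqrt (1 + ‖u‖^2)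
  have hs2 : s^2 = 1 + ‖u‖^2 := s_sq u
  have hs0 : 0 < s := s_pos u
  have hk : (V/c)^2 < 1 := by
    have := d_pos hc hV; rw [div_pow]; nlinarith
  have hu : u 0 ^2 < s^2 := by rw [hs2, norm_sq3]; nlinarith [sq_nonneg (u 1), sq_nonneg (u 2)]
  nlinarith [sq_nonneg ((V/c) * u 0 - s), sq_nonneg ((V/c) * u 0 + s), sq_nonneg (u 0)]

/-- Key identity: `√(1+‖T_V u‖²) = γ (√(1+‖u‖²) − (V/c) u₀)`. -/
lemma key {c V : ℝ} (hc : 0 < c) (hV : |V| < c) (u : EuclideanSpace ℝ (Fin 3)) :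
    Real.sqrt (1 + ‖velBoost c V u‖^2)
      = (1 / Real.sqrt (1 - V^2/c^2)) * (Real.sqrt (1 + ‖u‖^2) - (V/c) * u 0) := by
  set g := 1 / Real.sqrt (1 - V^2/c^2) with hgdef
  have hg2 := gam_sq hc hV
  have hg0 : 0 < g := by
    have := d_pos hc hV
    exact div_pos one_pos (Real.sqrt_pos.2 this)
  set s := Real.sqrt (1 + ‖u‖^2) with hsdef
  have hs2 : s^2 = 1 + ‖u‖^2 := s_sq u
  have hpos := s_sub_pos hc hV u
  have heq : 1 + ‖velBoost c V u‖^2 = (g * (s - (V/c) * u 0))^2 := by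
    rw [norm_sq3 (velBoost c V u), vb_apply0, vb_apply1, vb_apply2, ← hsdef, ← hgdef]
    have hn : ‖u‖^2 = u 0^2 + u 1^2 + u 2^2 := norm_sq3 u
    linear_combination ((u 0)^2 - s^2) * hg2 - hs2 - hn
  rw [heq, Real.sqrt_sq (by positivity)]

lemma vb_inv {c V : ℝ} (hc : 0 < c) (hV : |V| < c) (u : EuclideanSpace ℝ (Fin 3)) :
    velBoost c (-V) (velBoost c V u) = u := by
  have hVn : |(-V)| < c := by rwa [abs_neg]
  have hg2 := gam_sq hc hV
  have hkey := key hc hV u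
  ext i
  fin_cases i
  · show velBoost c (-V) (velBoost c V u) 0 = u 0
    rw [vb_apply0, hkey, vb_apply0]
    have hns : Real.sqrt (1 - (-V)^2/c^2) = Real.sqrt (1 - V^2/c^2) := by ring_nf
    rw [hns]
    set g := 1 / Real.sqrt (1 - V^2/c^2)
    set s := Real.sqrt (1 + ‖u‖^2)
    have hc' : c ≠ 0 := hc.ne'
    have hg2' : g^2 * (c^2 - V^2) = c^2 := by
      have h := hg2
      field_simp at h
      linarith [h]
    linear_combination (u 0) * hg2
  · show velBoost c (-V) (velBoost c V u) 1 = u 1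
    rw [vb_apply1, vb_apply1]
  · show velBoost c (-V) (velBoost c V u) 2 = u 2
    rw [vb_apply2, vb_apply2]

local notation "E3" => EuclideanSpace ℝ (Fin 3)

/-- derivative of `u ↦ √(1+‖u‖²)` -/
lemma hasFDerivAt_sfun (p : E3) :
    ∃ D : E3 →L[ℝ] ℝ, HasFDerivAt (fun u : E3 => Real.sqrt (1 + ‖u‖^2)) D p ∧
      ∀ e : E3, D e = (inner ℝ p e : ℝ) / Real.sqrt (1 + ‖p‖^2) := by
  have hi : HasFDerivAt (fun u : E3 => (inner ℝ u u : ℝ))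
      ((fderivInnerCLM ℝ (p, p)).comp ((ContinuousLinearMap.id ℝ E3).prod (ContinuousLinearMap.id ℝ E3))) p :=
    (hasFDerivAt_id p).inner ℝ (hasFDerivAt_id p)
  have hi' : HasFDerivAt (fun u : E3 => 1 + ‖u‖^2)
      ((fderivInnerCLM ℝ (p, p)).comp ((ContinuousLinearMap.id ℝ E3).prod (ContinuousLinearMap.id ℝ E3))) p := by
    have : (fun u : E3 => 1 + ‖u‖^2) = fun u : E3 => 1 + (inner ℝ u u : ℝ) := by
      funext u; rw [real_inner_self_eq_norm_sq]
    rw [this]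
    exact hi.const_add 1
  have hsq := hi'.sqrt (by positivity)
  refine ⟨_, hsq, fun e => ?_⟩
  simp [fderivInnerCLM_apply, real_inner_comm p e]
  ring

lemma hasFDerivAt_velBoost {c V : ℝ} (hc : 0 < c) (hV : |V| < c) (p : E3) :
    ∃ L : E3 →L[ℝ] E3, HasFDerivAt (velBoost c V) L p ∧
      ∀ e : E3, L e = e + ((1 / Real.sqrt (1 - V^2/c^2)) *
          (e 0 - (V/c) * ((inner ℝ p e : ℝ) / Real.sqrt (1 + ‖p‖^2))) - e 0)
            • EuclideanSpace.single 0 (1:ℝ) := by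
  obtain ⟨D, hD, hDe⟩ := hasFDerivAt_sfun p
  set g := 1 / Real.sqrt (1 - V^2/c^2) with hgdef
  -- ψ u = g*(u 0 - (V/c)*√(1+‖u‖²)) - u 0
  have hψ : HasFDerivAt (fun u : E3 => g * (u 0 - (V/c) * Real.sqrt (1 + ‖u‖^2)) - u 0)
      (g • ((EuclideanSpace.proj (0 : Fin 3) : E3 →L[ℝ] ℝ) - (V/c) • D) - (EuclideanSpace.proj (0 : Fin 3) : E3 →L[ℝ] ℝ)) p := by
    have h0 : HasFDerivAt (fun u : E3 => u 0) (EuclideanSpace.proj (0 : Fin 3) : E3 →L[ℝ] ℝ) p := by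
      simpa using (EuclideanSpace.proj (0 : Fin 3) : E3 →L[ℝ] ℝ).hasFDerivAt (x := p)
    exact ((h0.sub (hD.const_mul (V/c))).const_mul g).sub h0
  have hrw : velBoost c V = fun u : E3 =>
      u + (g * (u 0 - (V/c) * Real.sqrt (1 + ‖u‖^2)) - u 0) • EuclideanSpace.single 0 (1:ℝ) := by
    funext u
    ext i
    fin_cases i
    · show velBoost c V u 0 = _
      rw [vb_apply0]
      simp only [PiLp.add_apply, PiLp.smul_apply, EuclideanSpace.single_apply, smul_eq_mul,
        Fin.mk_zero, if_pos rfl, if_true]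
      ring
    · show velBoost c V u 1 = _
      rw [vb_apply1]
      simp only [PiLp.add_apply, PiLp.smul_apply, EuclideanSpace.single_apply, smul_eq_mul,
        Fin.mk_one]
      norm_num
    · show velBoost c V u 2 = _
      rw [vb_apply2]
      simp [EuclideanSpace.single_apply]
  have hmain := (hasFDerivAt_id p).add (hψ.smul (hasFDerivAt_const (EuclideanSpace.single 0 (1:ℝ)) p))
  simp only [id_eq] at hmain
  rw [show (id + (fun u : E3 => g * (u 0 - (V/c) * Real.sqrt (1 + ‖u‖^2)) - u 0) • fun _ : E3 => EuclideanSpace.single 0 (1:ℝ)) = velBoost c V from hrw.symm] at hmain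
  refine ⟨_, hmain, fun e => ?_⟩
  simp only [ContinuousLinearMap.add_apply, ContinuousLinearMap.id_apply,
    ContinuousLinearMap.smul_apply, ContinuousLinearMap.smulRight_apply,
    ContinuousLinearMap.sub_apply, ContinuousLinearMap.zero_apply, smul_zero, zero_add,
    PiLp.proj_apply, smul_eq_mul, hDe e]

/-- **Velocity-space derivatives of a Lorentz-invariant distribution** (Section 4.4): for
differentiable `f` and `g = f ∘ T_{−V}` (so `g(T_V u) = f(u)`), writing `u' = T_V u`,
`∂₁g(u') = √((1+‖u‖²)/(1+‖u'‖²)) ∂₁f(u)` and, for `i = 2, 3`,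
`∂ᵢg(u') = (V/c) γ_V (u'ᵢ/√(1+‖u'‖²)) ∂₁f(u) + ∂ᵢf(u)`. -/
theorem velBoost_partial_derivatives (c V : ℝ) (hc : 0 < c) (hV : |V| < c)
    (f : EuclideanSpace ℝ (Fin 3) → ℝ) (hf : Differentiable ℝ f)
    (g : EuclideanSpace ℝ (Fin 3) → ℝ) (hg : g = f ∘ velBoost c (-V)) :
    ∀ u : EuclideanSpace ℝ (Fin 3),
      (fderiv ℝ g (velBoost c V u) (EuclideanSpace.single 0 1)
        = Real.sqrt ((1 + ‖u‖ ^ 2) / (1 + ‖velBoost c V u‖ ^ 2))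
          * fderiv ℝ f u (EuclideanSpace.single 0 1)) ∧
      (∀ i : Fin 3, i = 1 ∨ i = 2 →
        fderiv ℝ g (velBoost c V u) (EuclideanSpace.single i 1)
          = (V / c) * (1 / Real.sqrt (1 - V ^ 2 / c ^ 2))
              * (velBoost c V u i / Real.sqrt (1 + ‖velBoost c V u‖ ^ 2))
              * fderiv ℝ f u (EuclideanSpace.single 0 1)
            + fderiv ℝ f u (EuclideanSpace.single i 1)) := by
  intro u
  have hVn : |(-V)| < c := by rwa [abs_neg]
  set p := velBoost c V u with hp
  obtain ⟨L, hL, hLe⟩ := hasFDerivAt_velBoost hc hVn p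
  have hinv : velBoost c (-V) p = u := vb_inv hc hV u
  have hgd : fderiv ℝ g p = (fderiv ℝ f u).comp L := by
    rw [hg]
    have hfd : HasFDerivAt f (fderiv ℝ f u) (velBoost c (-V) p) := by
      rw [hinv]; exact (hf u).hasFDerivAt
    exact (hfd.comp p hL).fderiv
  set gam := 1 / Real.sqrt (1 - V^2/c^2) with hgam
  have hnegV : (1 : ℝ) / Real.sqrt (1 - (-V)^2/c^2) = gam := by rw [neg_sq]
  have hg2' : gam^2 * (c^2 - V^2) = c^2 := by
    have h := gam_sq hc hV
    rw [← hgam] at h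
    have hc0 : (c:ℝ) ≠ 0 := hc.ne'
    field_simp at h
    linarith [h]
  set s := Real.sqrt (1 + ‖u‖^2) with hs
  set s' := Real.sqrt (1 + ‖p‖^2) with hs'
  have hs'pos : 0 < s' := s_pos p
  have hkey : s' = gam * (s - (V/c) * u 0) := key hc hV u
  have hp0 : p 0 = gam * (u 0 - (V/c) * s) := vb_apply0 c V u
  have hinner : ∀ i : Fin 3, (inner ℝ p (EuclideanSpace.single i (1:ℝ)) : ℝ) = p i := by
    intro i; simp [EuclideanSpace.inner_single_right]
  have heval : ∀ i : Fin 3, fderiv ℝ g p (EuclideanSpace.single i 1)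
      = fderiv ℝ f u (EuclideanSpace.single i 1)
        + (gam * ((EuclideanSpace.single i (1:ℝ)) 0 + (V/c) * (p i / s'))
            - (EuclideanSpace.single i (1:ℝ)) 0) * fderiv ℝ f u (EuclideanSpace.single 0 1) := by
    intro i
    rw [hgd, ContinuousLinearMap.comp_apply, hLe, hnegV, hinner i]
    rw [map_add, map_smul, smul_eq_mul]
    ring_nf
  have hc0 : (c:ℝ) ≠ 0 := hc.ne'
  have hgampos : 0 < gam := by
    rw [hgam]
    exact div_pos one_pos (Real.sqrt_pos.2 (d_pos hc hV))
  have hsubpos : 0 < s - V/c * u 0 := s_sub_pos hc hV u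
  have hsqrt : Real.sqrt ((1 + ‖u‖^2) / (1 + ‖p‖^2)) = s / s' := by
    rw [Real.sqrt_div (by positivity), ← hs, ← hs']
  clear_value gam s s' p
  constructor
  · rw [heval 0]
    have h00 : (EuclideanSpace.single (0:Fin 3) (1:ℝ)) 0 = 1 := by
      simp [EuclideanSpace.single_apply]
    rw [h00]
    have hcoef : 1 + (gam * (1 + V/c * (p 0 / s')) - 1) = s / s' := by
      rw [hp0, hkey]
      have h1 : s - V/c * u 0 ≠ 0 := hsubpos.ne'
      have h2 : gam ≠ 0 := hgampos.ne'
      have hcs : c * s - V * u 0 ≠ 0 := by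
        have h := mul_pos hc hsubpos
        have he : c * (s - V/c * u 0) = c * s - V * u 0 := by field_simp
        rw [he] at h
        exact h.ne'
      rw [mul_div_mul_left _ _ h2]
      have hx : -(V * u 0 * c) + c ^ 2 * s ≠ 0 := by
        have h : -(V * u 0 * c) + c ^ 2 * s = c * (c * s - V * u 0) := by ring
        rw [h]; exact mul_ne_zero hc0 hcs
      have hy : -(gam * V * u 0) + gam * c * s ≠ 0 := by
        have h : -(gam * V * u 0) + gam * c * s = gam * (c * s - V * u 0) := by ring
        rw [h]; exact mul_ne_zero h2 hcs
      field_simp [hcs]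
      ring_nf
      linear_combination s * hg2'
    rw [hsqrt]
    linear_combination (fderiv ℝ f u (EuclideanSpace.single 0 1)) * hcoef
  · intro i hi
    rw [heval i]
    have hi0 : (EuclideanSpace.single i (1:ℝ)) 0 = 0 := by
      rcases hi with h | h <;> subst h <;> simp [EuclideanSpace.single_apply]
    rw [hi0]
    ring
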